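/- arXiv:2605.19513 — 3 statements merged into one kernel-verified Lean document; each statement's English description precedes it below -/
import Mathlib

section
/- Let R be a linearly ordered abelian group and X a set with an R-valued metric d₁ on a finite set X₁ and d₂ on a finite set X₂, agreeing on X = X₁ ∩ X₂, with X nonempty. Define d∪ on X₁ ∪ X₂ by: d∪(a,b) = dᵢ(a,b) when a,b ∈ Xᵢ, and d∪(a,b) = min over c ∈ X of (d₁(a,c) + d₂(c,b)) when a ∈ X₁ \ X and b ∈ X₂ \ X (symmetrically for the other order). Then d∪ is an R-valued metric on X₁ ∪ X₂ extending d₁ and d₂. -/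
/-- `d` is an `R`-valued metric on the subset `S`. -/
def IsMetricOn {X R : Type*} [AddCommGroup R] [LinearOrder R] [IsOrderedAddMonoid R] (d : X → X → R) (S : Set X) :
    Prop :=
  (∀ x ∈ S, ∀ y ∈ S, (d x y = 0 ↔ x = y)) ∧
  (∀ x ∈ S, ∀ y ∈ S, d x y = d y x) ∧
  (∀ x ∈ S, ∀ y ∈ S, ∀ z ∈ S, d x z ≤ d x y + d y z)

/-- Amalgamation of two finite `R`-valued metric spaces over their common (nonempty)
intersection, using `d∪(a,b) = min_{c ∈ X₁ ∩ X₂} (d₁(a,c) + d₂(c,b))` for `a ∈ X₁ \ X₂`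
and `b ∈ X₂ \ X₁`, yields a metric on the union extending both. -/
theorem isMetricOn_amalgam {X R : Type*} [AddCommGroup R] [LinearOrder R] [IsOrderedAddMonoid R]
    (X₁ X₂ : Set X) (hfin₁ : X₁.Finite) (hfin₂ : X₂.Finite)
    (hne : (X₁ ∩ X₂).Nonempty)
    (d₁ d₂ dcup : X → X → R)
    (h₁ : IsMetricOn d₁ X₁) (h₂ : IsMetricOn d₂ X₂)
    (hagree : ∀ a ∈ X₁ ∩ X₂, ∀ b ∈ X₁ ∩ X₂, d₁ a b = d₂ a b)
    (hd₁ : ∀ a ∈ X₁, ∀ b ∈ X₁, dcup a b = d₁ a b)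
    (hd₂ : ∀ a ∈ X₂, ∀ b ∈ X₂, dcup a b = d₂ a b)
    (hmin : ∀ a ∈ X₁ \ X₂, ∀ b ∈ X₂ \ X₁,
      (∃ c ∈ X₁ ∩ X₂, dcup a b = d₁ a c + d₂ c b) ∧
      (∀ c ∈ X₁ ∩ X₂, dcup a b ≤ d₁ a c + d₂ c b) ∧
      dcup b a = dcup a b) :
    IsMetricOn dcup (X₁ ∪ X₂) ∧
      (∀ a ∈ X₁, ∀ b ∈ X₁, dcup a b = d₁ a b) ∧
      (∀ a ∈ X₂, ∀ b ∈ X₂, dcup a b = d₂ a b) := by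
  obtain ⟨e₁, s₁, t₁⟩ := h₁
  obtain ⟨e₂, s₂, t₂⟩ := h₂
  -- nonnegativity of a metric
  have nn : ∀ (d : X → X → R) (S : Set X),
      (∀ x ∈ S, ∀ y ∈ S, (d x y = 0 ↔ x = y)) →
      (∀ x ∈ S, ∀ y ∈ S, d x y = d y x) →
      (∀ x ∈ S, ∀ y ∈ S, ∀ z ∈ S, d x z ≤ d x y + d y z) →
      ∀ a ∈ S, ∀ b ∈ S, 0 ≤ d a b := by
    intro d S e s t a ha b hb
    by_contra h
    push_neg at h
    have h1 : d a b + d a b < 0 + 0 := add_lt_add h h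
    rw [add_zero] at h1
    have h2 : d a a ≤ d a b + d b a := t a ha b hb a ha
    rw [(e a ha a ha).mpr rfl, s b hb a ha] at h2
    exact absurd (lt_of_le_of_lt h2 h1) (lt_irrefl 0)
  have nn₁ := nn d₁ X₁ e₁ s₁ t₁
  have nn₂ := nn d₂ X₂ e₂ s₂ t₂
  -- existence of an optimal connecting point
  have exw : ∀ a ∈ X₁, ∀ b ∈ X₂, ∃ c ∈ X₁ ∩ X₂, dcup a b = d₁ a c + d₂ c b := by
    intro a ha b hb
    by_cases ha2 : a ∈ X₂
    · exact ⟨a, ⟨ha, ha2⟩, by rw [hd₂ a ha2 b hb, (e₁ a ha a ha).mpr rfl, zero_add]⟩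
    · by_cases hb1 : b ∈ X₁
      · exact ⟨b, ⟨hb1, hb⟩, by rw [hd₁ a ha b hb1, (e₂ b hb b hb).mpr rfl, add_zero]⟩
      · exact (hmin a ⟨ha, ha2⟩ b ⟨hb, hb1⟩).1
  -- upper bound through any connecting point
  have upper : ∀ a ∈ X₁, ∀ b ∈ X₂, ∀ c ∈ X₁ ∩ X₂, dcup a b ≤ d₁ a c + d₂ c b := by
    intro a ha b hb c hc
    by_cases ha2 : a ∈ X₂
    · rw [hd₂ a ha2 b hb, hagree a ⟨ha, ha2⟩ c hc]
      exact t₂ a ha2 c hc.2 b hb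
    · by_cases hb1 : b ∈ X₁
      · rw [hd₁ a ha b hb1, ← hagree c hc b ⟨hb1, hb⟩]
        exact t₁ a ha c hc.1 b hb1
      · exact (hmin a ⟨ha, ha2⟩ b ⟨hb, hb1⟩).2.1 c hc
  -- symmetry
  have dsym : ∀ a ∈ X₁ ∪ X₂, ∀ b ∈ X₁ ∪ X₂, dcup a b = dcup b a := by
    intro a ha b hb
    by_cases ha1 : a ∈ X₁
    · by_cases hb1 : b ∈ X₁
      · rw [hd₁ a ha1 b hb1, hd₁ b hb1 a ha1, s₁ a ha1 b hb1]
      · have hb2 : b ∈ X₂ := hb.resolve_left hb1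
        by_cases ha2 : a ∈ X₂
        · rw [hd₂ a ha2 b hb2, hd₂ b hb2 a ha2, s₂ a ha2 b hb2]
        · exact ((hmin a ⟨ha1, ha2⟩ b ⟨hb2, hb1⟩).2.2).symm
    · have ha2 : a ∈ X₂ := ha.resolve_left ha1
      by_cases hb2 : b ∈ X₂
      · rw [hd₂ a ha2 b hb2, hd₂ b hb2 a ha2, s₂ a ha2 b hb2]
      · have hb1 : b ∈ X₁ := hb.resolve_right hb2
        exact (hmin b ⟨hb1, hb2⟩ a ⟨ha2, ha1⟩).2.2
  -- triangle inequality, mixed endpoints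
  have key : ∀ x ∈ X₁, ∀ z ∈ X₂, ∀ y ∈ X₁ ∪ X₂, dcup x z ≤ dcup x y + dcup y z := by
    intro x hx z hz y hy
    by_cases hy1 : y ∈ X₁
    · obtain ⟨c, hc, hcEq⟩ := exw y hy1 z hz
      calc dcup x z ≤ d₁ x c + d₂ c z := upper x hx z hz c hc
        _ ≤ (d₁ x y + d₁ y c) + d₂ c z := add_le_add_left (t₁ x hx y hy1 c hc.1) _
        _ = dcup x y + dcup y z := by rw [hd₁ x hx y hy1, hcEq, add_assoc]
    · have hy2 : y ∈ X₂ := hy.resolve_left hy1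
      obtain ⟨c, hc, hcEq⟩ := exw x hx y hy2
      calc dcup x z ≤ d₁ x c + d₂ c z := upper x hx z hz c hc
        _ ≤ d₁ x c + (d₂ c y + d₂ y z) := add_le_add_right (t₂ c hc.2 y hy2 z hz) _
        _ = dcup x y + dcup y z := by rw [hd₂ y hy2 z hz, hcEq, add_assoc]
  -- triangle inequality, endpoints in X₁, middle only in X₂
  have keyd : ∀ x ∈ X₁, ∀ z ∈ X₁, ∀ y ∈ X₂, y ∉ X₁ →
      dcup x z ≤ dcup x y + dcup y z := by
    intro x hx z hz y hy2 hy1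
    obtain ⟨c, hc, hce⟩ := exw x hx y hy2
    obtain ⟨c', hc', hce'⟩ := exw z hz y hy2
    have hyz : dcup y z = d₁ z c' + d₂ c' y := by
      rw [dsym y (Or.inr hy2) z (Or.inl hz), hce', s₂ c' hc'.2 y hy2]
    have h1 : d₁ x z ≤ d₁ x c + d₁ c z := t₁ x hx c hc.1 z hz
    have h2 : d₁ c z ≤ d₁ c c' + d₁ c' z := t₁ c hc.1 c' hc'.1 z hz
    have h6 : d₁ c c' ≤ d₂ c y + d₂ c' y := by
      rw [hagree c hc c' hc', ← s₂ y hy2 c' hc'.2]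
      exact t₂ c hc.2 y hy2 c' hc'.2
    rw [hd₁ x hx z hz, hce, hyz]
    calc d₁ x z ≤ d₁ x c + (d₁ c c' + d₁ c' z) := le_trans h1 (add_le_add_right h2 _)
      _ ≤ d₁ x c + ((d₂ c y + d₂ c' y) + d₁ c' z) :=
          add_le_add_right (add_le_add_left h6 _) _
      _ = (d₁ x c + d₂ c y) + (d₁ z c' + d₂ c' y) := by
          rw [s₁ c' hc'.1 z hz]; abel
  -- triangle inequality, endpoints in X₂, middle only in X₁
  have keye : ∀ x ∈ X₂, ∀ z ∈ X₂, ∀ y ∈ X₁, y ∉ X₂ →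
      dcup x z ≤ dcup x y + dcup y z := by
    intro x hx z hz y hy1 hy2
    obtain ⟨c, hc, hce⟩ := exw y hy1 x hx
    obtain ⟨c', hc', hce'⟩ := exw y hy1 z hz
    have hxy : dcup x y = d₁ y c + d₂ c x := by
      rw [dsym x (Or.inr hx) y (Or.inl hy1), hce]
    have h1 : d₂ x z ≤ d₂ x c + d₂ c z := t₂ x hx c hc.2 z hz
    have h2 : d₂ c z ≤ d₂ c c' + d₂ c' z := t₂ c hc.2 c' hc'.2 z hz
    have h6 : d₂ c c' ≤ d₁ y c + d₁ y c' := by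
      rw [← hagree c hc c' hc', ← s₁ c hc.1 y hy1]
      exact t₁ c hc.1 y hy1 c' hc'.1
    rw [hd₂ x hx z hz, hxy, hce']
    calc d₂ x z ≤ d₂ x c + (d₂ c c' + d₂ c' z) := le_trans h1 (add_le_add_right h2 _)
      _ ≤ d₂ x c + ((d₁ y c + d₁ y c') + d₂ c' z) :=
          add_le_add_right (add_le_add_left h6 _) _
      _ = (d₁ y c + d₂ c x) + (d₁ y c' + d₂ c' z) := by
          rw [s₂ x hx c hc.2]; abel
  -- full triangle inequality
  have tri : ∀ x ∈ X₁ ∪ X₂, ∀ y ∈ X₁ ∪ X₂, ∀ z ∈ X₁ ∪ X₂,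
      dcup x z ≤ dcup x y + dcup y z := by
    intro x hx y hy z hz
    by_cases hx1 : x ∈ X₁
    · by_cases hz1 : z ∈ X₁
      · by_cases hy1 : y ∈ X₁
        · rw [hd₁ x hx1 z hz1, hd₁ x hx1 y hy1, hd₁ y hy1 z hz1]
          exact t₁ x hx1 y hy1 z hz1
        · exact keyd x hx1 z hz1 y (hy.resolve_left hy1) hy1
      · exact key x hx1 z (hz.resolve_left hz1) y hy
    · have hx2 : x ∈ X₂ := hx.resolve_left hx1
      by_cases hz2 : z ∈ X₂
      · by_cases hy2 : y ∈ X₂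
        · rw [hd₂ x hx2 z hz2, hd₂ x hx2 y hy2, hd₂ y hy2 z hz2]
          exact t₂ x hx2 y hy2 z hz2
        · exact keye x hx2 z hz2 y (hy.resolve_right hy2) hy2
      · have hz1 : z ∈ X₁ := hz.resolve_right hz2
        have hkey := key z hz1 x hx2 y hy
        rw [dsym z hz x hx, dsym z hz y hy, dsym y hy x hx] at hkey
        exact le_of_le_of_eq hkey (add_comm _ _)
  -- zero iff equal
  have zer : ∀ a ∈ X₁ ∪ X₂, ∀ b ∈ X₁ ∪ X₂, (dcup a b = 0 ↔ a = b) := by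
    have mixed : ∀ a ∈ X₁, a ∉ X₂ → ∀ b ∈ X₂, b ∉ X₁ → 0 < dcup a b := by
      intro a ha1 ha2 b hb2 hb1
      obtain ⟨c, hc, hce⟩ := (hmin a ⟨ha1, ha2⟩ b ⟨hb2, hb1⟩).1
      have hac : a ≠ c := fun h => ha2 (h ▸ hc.2)
      have h1 : 0 < d₁ a c := lt_of_le_of_ne (nn₁ a ha1 c hc.1)
        (fun h => hac ((e₁ a ha1 c hc.1).mp h.symm))
      have h2 : 0 ≤ d₂ c b := nn₂ c hc.2 b hb2
      rw [hce]
      calc (0 : R) = 0 + 0 := (add_zero 0).symm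
        _ < d₁ a c + d₂ c b := add_lt_add_of_lt_of_le h1 h2
    intro a ha b hb
    by_cases ha1 : a ∈ X₁
    · by_cases hb1 : b ∈ X₁
      · rw [hd₁ a ha1 b hb1]; exact e₁ a ha1 b hb1
      · have hb2 : b ∈ X₂ := hb.resolve_left hb1
        by_cases ha2 : a ∈ X₂
        · rw [hd₂ a ha2 b hb2]; exact e₂ a ha2 b hb2
        · constructor
          · intro h; exact absurd h (ne_of_gt (mixed a ha1 ha2 b hb2 hb1))
          · intro h; subst h; exact absurd hb2 ha2
    · have ha2 : a ∈ X₂ := ha.resolve_left ha1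
      by_cases hb2 : b ∈ X₂
      · rw [hd₂ a ha2 b hb2]; exact e₂ a ha2 b hb2
      · have hb1 : b ∈ X₁ := hb.resolve_right hb2
        rw [dsym a ha b hb]
        constructor
        · intro h; exact absurd h (ne_of_gt (mixed b hb1 hb2 a ha2 ha1))
        · intro h; subst h; exact absurd ha2 hb2
  exact ⟨⟨zer, dsym, tri⟩, hd₁, hd₂⟩
end

section
/- Let R be a linearly ordered abelian group, P a set, and f : P² → R a symmetric function (f(p,q) = f(q,p)) with f(p,q) ≥ 0 for all p, q. Suppose δ ∈ R satisfies δ > f(p,q) + f(p',q') for all p, q, p', q' ∈ P and δ > 0. Define d on X = P × {1,2} by: d((p,i),(q,i)) = 0 if p = q; d((p,i),(q,i)) = δ if p ≠ q; and d((p,1),(q,2)) = d((q,2),(p,1)) = f(p,q) + δ. Then d is an R-valued metric on X. -/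
/-- `d` is an `R`-valued metric on the type `X`. -/
def IsMetric {X R : Type*} [AddCommGroup R] [LinearOrder R] [IsOrderedAddMonoid R] (d : X → X → R) : Prop :=
  (∀ x y, (d x y = 0 ↔ x = y)) ∧ (∀ x y, d x y = d y x) ∧
    (∀ x y z, d x z ≤ d x y + d y z)

/-- Given a symmetric nonnegative `f : P² → R` and `δ` with `δ > f(p,q) + f(p',q')`
for all `p,q,p',q'` and `δ > 0`, the function on `X = P × {1,2}` given by `0` on the
diagonal, `δ` within each copy, and `f(p,q) + δ` across the copies, is an `R`-valued
metric. -/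
theorem isMetric_double_cover {P R : Type*} [AddCommGroup R] [LinearOrder R] [IsOrderedAddMonoid R]
    (f : P → P → R) (hsymm : ∀ p q, f p q = f q p) (hnonneg : ∀ p q, 0 ≤ f p q)
    (δ : R) (hδpos : 0 < δ)
    (hδbig : ∀ p q p' q', f p q + f p' q' < δ)
    (d : P × Fin 2 → P × Fin 2 → R)
    (hdiag : ∀ x : P × Fin 2, d x x = 0)
    (hsame : ∀ (p q : P) (i : Fin 2), p ≠ q → d (p, i) (q, i) = δ)
    (hcross : ∀ p q : P, d (p, 0) (q, 1) = f p q + δ ∧ d (q, 1) (p, 0) = f p q + δ) :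
    IsMetric d := by
  have hfδ : ∀ p q, f p q < δ := fun p q =>
    lt_of_le_of_lt (le_add_of_nonneg_right (hnonneg q q)) (hδbig p q q q)
  have hge : ∀ x y, x ≠ y → δ ≤ d x y := by
    rintro ⟨p, i⟩ ⟨q, j⟩ hne
    fin_cases i <;> fin_cases j
    · have hpq : p ≠ q := fun h => hne (by rw [h])
      rw [hsame p q _ hpq]
    · show δ ≤ d (p, 0) (q, 1)
      rw [(hcross p q).1]; exact le_add_of_nonneg_left (hnonneg p q)
    · show δ ≤ d (p, 1) (q, 0)
      rw [(hcross q p).2]; exact le_add_of_nonneg_left (hnonneg q p)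
    · have hpq : p ≠ q := fun h => hne (by rw [h])
      rw [hsame p q _ hpq]
  have hnn : ∀ x y, 0 ≤ d x y := by
    intro x y
    rcases eq_or_ne x y with h | h
    · rw [h, hdiag]
    · exact hδpos.le.trans (hge x y h)
  have hlt : ∀ x y, d x y < δ + δ := by
    rintro ⟨p, i⟩ ⟨q, j⟩
    have hsame' : ∀ (p q : P) (i : Fin 2), d (p, i) (q, i) < δ + δ := by
      intro p q i
      rcases eq_or_ne p q with h | h
      · rw [h, hdiag]; exact add_pos hδpos hδpos
      · rw [hsame p q i h]; exact lt_add_of_pos_right δ hδpos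
    fin_cases i <;> fin_cases j
    · exact hsame' p q 0
    · show d (p, 0) (q, 1) < δ + δ
      rw [(hcross p q).1]; exact add_lt_add_left (hfδ p q) δ
    · show d (p, 1) (q, 0) < δ + δ
      rw [(hcross q p).2]; exact add_lt_add_left (hfδ q p) δ
    · exact hsame' p q 1
  refine ⟨?_, ?_, ?_⟩
  · intro x y
    constructor
    · intro h
      by_contra hne
      exact absurd h (ne_of_gt (hδpos.trans_le (hge x y hne)))
    · rintro rfl; exact hdiag x
  · rintro ⟨p, i⟩ ⟨q, j⟩
    have hs : ∀ (p q : P) (i : Fin 2), d (p, i) (q, i) = d (q, i) (p, i) := by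
      intro p q i
      rcases eq_or_ne p q with h | h
      · rw [h]
      · rw [hsame p q i h, hsame q p i h.symm]
    fin_cases i <;> fin_cases j
    · exact hs p q 0
    · show d (p, 0) (q, 1) = d (q, 1) (p, 0)
      rw [(hcross p q).1, (hcross p q).2]
    · show d (p, 1) (q, 0) = d (q, 0) (p, 1)
      rw [(hcross q p).2, (hcross q p).1]
    · exact hs p q 1
  · intro x y z
    rcases eq_or_ne x y with rfl | hxy
    · rw [hdiag]; simp
    rcases eq_or_ne y z with rfl | hyz
    · rw [hdiag]; simp
    exact ((hlt x z).trans_le (add_le_add (hge x y hxy) (hge y z hyz))).le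
end

section
/- Let L be a language consisting only of relation symbols of arity at most 2, and let M be an L-structure with quantifier elimination. Let A ⊆ M, let p₁(x₁), …, p_k(x_k) be complete 1-types over A realized in M, and let φ(x₁,…,x_k) be an L(A)-formula. Then there is an L-formula φ*(x₁,…,x_k) without parameters such that for all tuples (a₁,…,a_k) with aᵢ realizing pᵢ, M ⊨ φ(a₁,…,a_k) ↔ φ*(a₁,…,a_k). -/
open FirstOrder FirstOrder.Language

section AuxBQE

variable {L : FirstOrder.Language} {M : Type*} [L.Structure M]

private lemma bqe_term_is_var (hfun : ∀ n, IsEmpty (L.Functions n)) {β : Type*}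
    (t : L.Term (β ⊕ Fin 0)) : ∃ v : β, t = Term.var (Sum.inl v) := by
  cases t with
  | var v =>
    cases v with
    | inl v => exact ⟨v, rfl⟩
    | inr i => exact i.elim0
  | func f ts => exact ((hfun _).false f).elim

private lemma bqe_swap_param {A : Set M} {k : ℕ} {c a : Fin k → M}
    (ha : ∀ i : Fin k, ∀ θ : (L[[A]]).Formula (Fin 1),
      (θ.Realize (fun _ => a i) ↔ θ.Realize (fun _ => c i)))
    (α₂ : L.Formula (Fin 2)) (p : A) (i : Fin k) :
    α₂.Realize (M := M) ![↑p, a i] ↔ α₂.Realize (M := M) ![↑p, c i] := by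
  set θ : (L[[A]]).Formula (Fin 1) :=
    BoundedFormula.subst ((L.lhomWithConstants A).onFormula α₂)
      ![(L.con p).term, Term.var 0] with hθ
  have key : ∀ x : M, θ.Realize (fun _ => x) ↔ α₂.Realize (M := M) ![↑p, x] := by
    intro x
    have h1 : θ.Realize (fun _ => x) ↔
        ((L.lhomWithConstants A).onFormula α₂).Realize
          (fun j => (![(L.con p).term, Term.var 0] j).realize (fun _ : Fin 1 => x)) := by
      rw [hθ, Formula.Realize, BoundedFormula.realize_subst]; rfl
    rw [h1, LHom.realize_onFormula]
    have h2 : (fun j => (![(L.con p).term, Term.var 0] j).realize (fun _ : Fin 1 => x))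
        = ![(↑p : M), x] := by
      funext j
      fin_cases j
      · simp [Term.realize_con]
      · simp
    rw [h2]
  rw [← key (a i), ← key (c i)]
  exact ha i θ

private lemma bqe_qf_param_free (hfun : ∀ n, IsEmpty (L.Functions n))
    (hrel : ∀ n, 2 < n → IsEmpty (L.Relations n))
    (A : Set M) {k : ℕ} (c : Fin k → M) {β : Type*} (u : β → (↥A ⊕ Fin k)) :
    ∀ {χ : L.BoundedFormula β 0}, χ.IsQF →
    ∃ χs : L.Formula (Fin k), ∀ a : Fin k → M,
      (∀ i : Fin k, ∀ θ : (L[[A]]).Formula (Fin 1),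
        (θ.Realize (fun _ => a i) ↔ θ.Realize (fun _ => c i))) →
      (χ.Realize (Sum.elim (Subtype.val : ↥A → M) a ∘ u) default ↔ χs.Realize a) := by
  classical
  intro χ h
  induction h with
  | falsum => exact ⟨⊥, fun a _ => Iff.rfl⟩
  | imp _ _ ih1 ih2 =>
    obtain ⟨s1, hs1⟩ := ih1
    obtain ⟨s2, hs2⟩ := ih2
    exact ⟨s1.imp s2, fun a ha => by
      simp only [BoundedFormula.realize_imp]
      rw [hs1 a ha, hs2 a ha]
      rfl⟩
  | of_isAtomic hA =>
    cases hA with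
    | equal t₁ t₂ =>
      obtain ⟨v₁, rfl⟩ := bqe_term_is_var hfun t₁
      obtain ⟨v₂, rfl⟩ := bqe_term_is_var hfun t₂
      have hval : ∀ a : Fin k → M,
          (((Term.var (Sum.inl v₁) : L.Term (β ⊕ Fin 0)).bdEqual
            (Term.var (Sum.inl v₂))).Realize
            (Sum.elim (Subtype.val : ↥A → M) a ∘ u) default ↔
          Sum.elim (Subtype.val : ↥A → M) a (u v₁)
            = Sum.elim (Subtype.val : ↥A → M) a (u v₂)) := by
        intro a
        simp [BoundedFormula.realize_bdEqual, Function.comp]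
      rcases h1 : u v₁ with p | i <;> rcases h2 : u v₂ with q | j
      · -- both parameters
        refine ⟨if (↑p : M) = ↑q then ⊤ else ⊥, fun a ha => ?_⟩
        rw [hval a, h1, h2]
        simp only [Sum.elim_inl]
        split_ifs with h <;>
          simp [h, Formula.Realize, BoundedFormula.realize_top, BoundedFormula.realize_bot]
      · -- parameter = variable
        refine ⟨if (↑p : M) = c j then ⊤ else ⊥, fun a ha => ?_⟩
        have hswap := bqe_swap_param ha (Term.equal (Term.var 0) (Term.var 1)) p j
        simp only [Formula.realize_equal, Term.realize_var, Matrix.cons_val_zero,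
          Matrix.cons_val_one, Matrix.head_cons] at hswap
        rw [hval a, h1, h2]
        simp only [Sum.elim_inl, Sum.elim_inr]
        rw [hswap]
        split_ifs with h <;>
          simp [h, Formula.Realize, BoundedFormula.realize_top, BoundedFormula.realize_bot]
      · -- variable = parameter
        refine ⟨if c i = (↑q : M) then ⊤ else ⊥, fun a ha => ?_⟩
        have hswap := bqe_swap_param ha (Term.equal (Term.var 1) (Term.var 0)) q i
        simp only [Formula.realize_equal, Term.realize_var, Matrix.cons_val_zero,
          Matrix.cons_val_one, Matrix.head_cons] at hswap
        rw [hval a, h1, h2]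
        simp only [Sum.elim_inl, Sum.elim_inr]
        rw [hswap]
        split_ifs with h <;>
          simp [h, Formula.Realize, BoundedFormula.realize_top, BoundedFormula.realize_bot]
      · -- variable = variable
        refine ⟨Term.equal (Term.var i) (Term.var j), fun a ha => ?_⟩
        rw [hval a, h1, h2]
        simp [Formula.realize_equal]
    | @rel l R ts =>
      have hbase : ∀ a : Fin k → M, (R.boundedFormula ts).Realize
          (Sum.elim (Subtype.val : ↥A → M) a ∘ u) default ↔
          Structure.RelMap R (fun i =>
            (ts i).realize (Sum.elim (Sum.elim (Subtype.val : ↥A → M) a ∘ u) default)) :=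
        fun a => BoundedFormula.realize_rel
      match l, R, ts with
      | 0, R, ts =>
        refine ⟨if Structure.RelMap (M := M) R finZeroElim then ⊤ else ⊥, fun a ha => ?_⟩
        rw [hbase a]
        have : (fun i => (ts i).realize
            (Sum.elim (Sum.elim (Subtype.val : ↥A → M) a ∘ u) default)) = finZeroElim :=
          funext fun i => i.elim0
        rw [this]
        split_ifs with h <;> simp [h, Formula.Realize]
      | 1, R, ts =>
        obtain ⟨v, hv⟩ := bqe_term_is_var hfun (ts 0)
        have hfn : ∀ a : Fin k → M, (fun i => (ts i).realize
            (Sum.elim (Sum.elim (Subtype.val : ↥A → M) a ∘ u) default))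
            = ![Sum.elim (Subtype.val : ↥A → M) a (u v)] := by
          intro a
          funext i
          fin_cases i
          simp [hv, Function.comp]
        rcases h1 : u v with p | i
        · refine ⟨if Structure.RelMap (M := M) R ![(↑p : M)] then ⊤ else ⊥, fun a ha => ?_⟩
          rw [hbase a, hfn a, h1]
          simp only [Sum.elim_inl]
          split_ifs with h <;> simp [h, Formula.Realize]
        · refine ⟨Relations.formula₁ R (Term.var i), fun a ha => ?_⟩
          rw [hbase a, hfn a, h1]
          simp [Formula.realize_rel₁]
      | 2, R, ts =>
        obtain ⟨v₁, hv₁⟩ := bqe_term_is_var hfun (ts 0)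
        obtain ⟨v₂, hv₂⟩ := bqe_term_is_var hfun (ts 1)
        have hfn : ∀ a : Fin k → M, (fun i => (ts i).realize
            (Sum.elim (Sum.elim (Subtype.val : ↥A → M) a ∘ u) default))
            = ![Sum.elim (Subtype.val : ↥A → M) a (u v₁),
                Sum.elim (Subtype.val : ↥A → M) a (u v₂)] := by
          intro a
          funext i
          fin_cases i
          · simp [hv₁, Function.comp]
          · simp [hv₂, Function.comp]
        rcases h1 : u v₁ with p | i <;> rcases h2 : u v₂ with q | j
        · refine ⟨if Structure.RelMap (M := M) R ![(↑p : M), (↑q : M)] then ⊤ else ⊥,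
            fun a ha => ?_⟩
          rw [hbase a, hfn a, h1, h2]
          simp only [Sum.elim_inl]
          split_ifs with h <;> simp [h, Formula.Realize]
        · refine ⟨if Structure.RelMap (M := M) R ![(↑p : M), c j] then ⊤ else ⊥,
            fun a ha => ?_⟩
          have hswap := bqe_swap_param ha
            (Relations.formula₂ R (Term.var 0) (Term.var 1)) p j
          simp only [Formula.realize_rel₂, Term.realize_var, Matrix.cons_val_zero,
            Matrix.cons_val_one, Matrix.head_cons] at hswap
          rw [hbase a, hfn a, h1, h2]
          simp only [Sum.elim_inl, Sum.elim_inr]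
          rw [hswap]
          split_ifs with h <;> simp [h, Formula.Realize]
        · refine ⟨if Structure.RelMap (M := M) R ![c i, (↑q : M)] then ⊤ else ⊥,
            fun a ha => ?_⟩
          have hswap := bqe_swap_param ha
            (Relations.formula₂ R (Term.var 1) (Term.var 0)) q i
          simp only [Formula.realize_rel₂, Term.realize_var, Matrix.cons_val_zero,
            Matrix.cons_val_one, Matrix.head_cons] at hswap
          rw [hbase a, hfn a, h1, h2]
          simp only [Sum.elim_inl, Sum.elim_inr]
          rw [hswap]
          split_ifs with h <;> simp [h, Formula.Realize]
        · refine ⟨Relations.formula₂ R (Term.var i) (Term.var j), fun a ha => ?_⟩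
          rw [hbase a, hfn a, h1, h2]
          simp [Formula.realize_rel₂]
      | (n + 3), R, ts => exact ((hrel (n + 3) (by omega)).false R).elim

end AuxBQE

/-- Let `L` be a relational language all of whose relation symbols have arity at most
`2`, and let `M` be an `L`-structure with quantifier elimination.  Let `A ⊆ M`, let
`p₁, …, p_k` be complete 1-types over `A` realized in `M` (represented by realizations
`c 1, …, c k`), and let `φ(x₁,…,x_k)` be an `L(A)`-formula.  Then there is an
`L`-formula `φ*` without parameters such that `φ` and `φ*` agree on every tuple
`(a₁,…,a_k)` with each `aᵢ` realizing `pᵢ`. -/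
theorem binary_qe_type_determined {L : FirstOrder.Language}
    (hfun : ∀ n, IsEmpty (L.Functions n))
    (hrel : ∀ n, 2 < n → IsEmpty (L.Relations n))
    {M : Type*} [L.Structure M]
    (hQE : ∀ (n : ℕ) (φ : L.Formula (Fin n)), ∃ ψ : L.Formula (Fin n),
      ψ.IsQF ∧ ∀ v : Fin n → M, φ.Realize v ↔ ψ.Realize v)
    (A : Set M) (k : ℕ) (c : Fin k → M)
    (φ : (L[[A]]).Formula (Fin k)) :
    ∃ φstar : L.Formula (Fin k), ∀ a : Fin k → M,
      (∀ i : Fin k, ∀ θ : (L[[A]]).Formula (Fin 1),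
        (θ.Realize (fun _ => a i) ↔ θ.Realize (fun _ => c i))) →
      (φ.Realize a ↔ φstar.Realize a) := by
  classical
  -- Step 1: replace the constants from `A` by fresh variables.
  set ψ : L.BoundedFormula (↥A ⊕ Fin k) 0 := BoundedFormula.constantsVarsEquiv φ with hψ
  have hψreal : ∀ a : Fin k → M,
      ψ.Realize (Sum.elim (Subtype.val : ↥A → M) a) default ↔ φ.Realize a := by
    intro a
    have := BoundedFormula.realize_constantsVarsEquiv (M := M) (φ := φ)
      (v := a) (xs := (default : Fin 0 → M))
    have hcoe : (Sum.elim (fun b : ↥A => ((L.con b : (L[[A]]).Constants) : M)) a)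
        = Sum.elim (Subtype.val : ↥A → M) a := by
      funext x
      cases x <;> simp
    rw [← hψ] at this
    rw [← hcoe]
    exact this
  -- Step 2: restrict to the finitely many free variables.
  set T : Finset (↥A ⊕ Fin k) := ψ.freeVarFinset with hT
  have hsub : ↑ψ.freeVarFinset ⊆ (↑T : Set (↥A ⊕ Fin k)) := by rw [hT]
  set ψ₀ : L.BoundedFormula (↥(↑T : Set (↥A ⊕ Fin k))) 0 :=
    ψ.restrictFreeVar (Set.inclusion hsub) with hψ₀
  have hψ₀real : ∀ v : (↥A ⊕ Fin k) → M,
      ψ₀.Realize (v ∘ (↑)) default ↔ ψ.Realize v default := fun v =>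
    BoundedFormula.realize_restrictFreeVar' hsub
  -- Step 3: relabel to `Fin n` and apply quantifier elimination.
  set n : ℕ := Fintype.card (↥(↑T : Set (↥A ⊕ Fin k)))
  set e : (↥(↑T : Set (↥A ⊕ Fin k))) ≃ Fin n := Fintype.equivFin _ with he
  set χ : L.Formula (Fin n) := Formula.relabel e ψ₀ with hχ
  obtain ⟨ρ, hρQF, hρreal⟩ := hQE n χ
  -- Step 4: eliminate the parameter variables from the quantifier-free `ρ`.
  obtain ⟨φstar, hstar⟩ := bqe_qf_param_free hfun hrel A c
    ((Subtype.val : (↥(↑T : Set (↥A ⊕ Fin k))) → (↥A ⊕ Fin k)) ∘ e.symm) hρQF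
  refine ⟨φstar, fun a ha => ?_⟩
  have key := hstar a ha
  have hcomp : (Sum.elim (Subtype.val : ↥A → M) a ∘
      ((Subtype.val : (↥(↑T : Set (↥A ⊕ Fin k))) → (↥A ⊕ Fin k)) ∘ e.symm))
      = ((Sum.elim (Subtype.val : ↥A → M) a ∘ (↑)) ∘ e.symm) := rfl
  rw [hcomp] at key
  have hχreal : χ.Realize ((Sum.elim (Subtype.val : ↥A → M) a ∘ (↑)) ∘ e.symm)
      ↔ ψ₀.Realize (Sum.elim (Subtype.val : ↥A → M) a ∘ (↑)) default := by
    rw [hχ, Formula.realize_relabel]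
    have : ((Sum.elim (Subtype.val : ↥A → M) a ∘ (↑)) ∘ e.symm) ∘ e
        = (Sum.elim (Subtype.val : ↥A → M) a ∘ (↑)) := by
      funext x
      simp
    rw [this]
    rfl
  calc φ.Realize a ↔ ψ.Realize (Sum.elim (Subtype.val : ↥A → M) a) default :=
        (hψreal a).symm
    _ ↔ ψ₀.Realize (Sum.elim (Subtype.val : ↥A → M) a ∘ (↑)) default :=
        (hψ₀real _).symm
    _ ↔ χ.Realize ((Sum.elim (Subtype.val : ↥A → M) a ∘ (↑)) ∘ e.symm) := hχreal.symm
    _ ↔ ρ.Realize ((Sum.elim (Subtype.val : ↥A → M) a ∘ (↑)) ∘ e.symm) := hρreal _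
    _ ↔ φstar.Realize a := key
end
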